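/- Fix θ ∈ [θ_min, θ_max] with 0 < θ_min < θ_max, a constant preference function v_θ(x) = θ, and w : [0,1] → [0,1] continuously differentiable, strictly increasing with k_w = inf w' > 0 and θ_min > w(0)/∫₀¹(w(x)−w(0))dx. Let y(θ) ∈ (0,1) be the unique maximizer of g(y,θ) := r([y,1], v_θ). Then for every Borel set S ⊆ [0,1], r([y(θ),1], v_θ) − r(S, v_θ) ≥ κ₀ (vol(S) − (1 − y(θ)))², where κ₀ = (θ_min k_w / 2)/(1 + θ_max). -/

import Mathlib

open MeasureTheory Set
open Topology Filter

set_option maxHeartbeats 1000000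

theorem stmt6 (w w' : ℝ → ℝ) (θmin θmax θ kw : ℝ)
    (hθmin_pos : 0 < θmin) (hθlt : θmin < θmax) (hθ : θ ∈ Icc θmin θmax)
    (hw_cont : ContinuousOn w (Icc 0 1))
    (hw_mono : StrictMonoOn w (Icc 0 1))
    (hw_range : ∀ x ∈ Icc (0:ℝ) 1, w x ∈ Icc (0:ℝ) 1)
    (hw_deriv : ∀ x ∈ Ioo (0:ℝ) 1, HasDerivAt w (w' x) x)
    (hw'_cont : ContinuousOn w' (Ioo 0 1))
    (hkw : 0 < kw) (hkw_le : ∀ x ∈ Ioo (0:ℝ) 1, kw ≤ w' x)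
    (hθmin : w 0 / (∫ x in Icc (0:ℝ) 1, (w x - w 0)) < θmin)
    (y : ℝ) (hy : y ∈ Ioo (0:ℝ) 1)
    (hy_max : ∀ z ∈ Icc (0:ℝ) 1,
      (θ * ∫ x in Icc z 1, w x) / (1 + θ * (1 - z)) ≤
        (θ * ∫ x in Icc y 1, w x) / (1 + θ * (1 - y))) :
    ∀ S : Set ℝ, MeasurableSet S → S ⊆ Icc 0 1 →
      (θmin * kw / 2) / (1 + θmax) * ((volume S).toReal - (1 - y)) ^ 2 ≤
        (θ * ∫ x in Icc y 1, w x) / (1 + θ * (1 - y)) -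
          (θ * ∫ x in S, w x) / (1 + θ * (volume S).toReal) := by
  intro S hSm hS01
  obtain ⟨hy0, hy1⟩ := hy
  have hθpos : 0 < θ := lt_of_lt_of_le hθmin_pos hθ.1
  have hθmax : θ ≤ θmax := hθ.2
  -- Integrability of w on [0,1]
  have hwi : IntegrableOn w (Icc 0 1) volume := hw_cont.integrableOn_Icc
  have hII : ∀ a b : ℝ, a ∈ Icc (0:ℝ) 1 → b ∈ Icc (0:ℝ) 1 →
      IntervalIntegrable w volume a b := by
    intro a b ha hb
    exact (hw_cont.mono (uIcc_subset_Icc ha hb)).intervalIntegrable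
  have hy01 : y ∈ Icc (0:ℝ) 1 := ⟨le_of_lt hy0, le_of_lt hy1⟩
  have h01 : (0:ℝ) ∈ Icc (0:ℝ) 1 := by constructor <;> norm_num
  have h11 : (1:ℝ) ∈ Icc (0:ℝ) 1 := by constructor <;> norm_num
  -- converting Icc integrals to interval integrals
  have hIcc : ∀ a : ℝ, a ≤ 1 → (∫ x in Icc a 1, w x) = ∫ t in a..1, w t := by
    intro a ha
    rw [intervalIntegral.integral_of_le ha, integral_Icc_eq_integral_Ioc]
  -- measure of S
  have hSfin : volume S ≠ ⊤ :=
    (lt_of_le_of_lt (measure_mono (μ := volume) hS01)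
      (by rw [Real.volume_Icc]; exact ENNReal.ofReal_lt_top)).ne
  obtain ⟨m, hm_def⟩ : ∃ m : ℝ, (volume S).toReal = m := ⟨_, rfl⟩
  rw [hm_def]
  have hm0 : 0 ≤ m := hm_def ▸ ENNReal.toReal_nonneg
  have hm1 : m ≤ 1 := by
    have h1 := measure_mono (μ := volume) hS01
    rw [Real.volume_Icc] at h1
    have h := ENNReal.toReal_mono (by norm_num) h1
    rw [hm_def] at h
    simpa using h
  obtain ⟨z, hz_def⟩ : ∃ z : ℝ, (1:ℝ) - m = z := ⟨_, rfl⟩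
  have hz01 : z ∈ Icc (0:ℝ) 1 := ⟨by linarith, by linarith⟩
  -- growth bound from derivative
  have hgrow : ∀ a ∈ Icc (0:ℝ) 1, ∀ b ∈ Icc (0:ℝ) 1, a ≤ b → kw * (b - a) ≤ w b - w a := by
    have hdiff : DifferentiableOn ℝ w (interior (Icc (0:ℝ) 1)) := by
      rw [interior_Icc]
      intro x hx
      exact (hw_deriv x hx).differentiableAt.differentiableWithinAt
    refine (convex_Icc (0:ℝ) 1).mul_sub_le_image_sub_of_le_deriv hw_cont hdiff ?_
    rw [interior_Icc]
    intro x hx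
    rw [(hw_deriv x hx).deriv]
    exact hkw_le x hx
  -- First-order condition: w y * (1 + θ*(1-y)) = θ * ∫ y..1 w
  have hfoc : w y * (1 + θ * (1 - y)) = θ * ∫ t in y..1, w t := by
    have hJint : IntervalIntegrable w volume y 1 := hII y 1 hy01 h11
    have hmeas : StronglyMeasurableAtFilter w (𝓝 y) volume :=
      (hw_cont.mono Ioo_subset_Icc_self).stronglyMeasurableAtFilter isOpen_Ioo y ⟨hy0, hy1⟩
    have hcontAt : ContinuousAt w y := hw_cont.continuousAt (Icc_mem_nhds hy0 hy1)
    have h1 : HasDerivAt (fun u => ∫ t in u..1, w t) (-(w y)) y :=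
      intervalIntegral.integral_hasDerivAt_left hJint hmeas hcontAt
    have hnum : HasDerivAt (fun u => θ * ∫ t in u..1, w t) (θ * -(w y)) y := h1.const_mul θ
    have hden : HasDerivAt (fun u : ℝ => 1 + θ * (1 - u)) (-θ) y := by
      have h2 : HasDerivAt (fun u : ℝ => 1 - u) (-1 : ℝ) y := by
        simpa using (hasDerivAt_id y).const_sub 1
      have h3 := (h2.const_mul θ).const_add 1
      simpa using h3
    have hden_pos : 0 < 1 + θ * (1 - y) := by nlinarith
    have hJd := hnum.div hden (ne_of_gt hden_pos)
    have hmax : IsLocalMax (fun u => (θ * ∫ t in u..1, w t) / (1 + θ * (1 - u))) y := by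
      have hmem : Ioo (0:ℝ) 1 ∈ 𝓝 y := isOpen_Ioo.mem_nhds ⟨hy0, hy1⟩
      filter_upwards [hmem] with u hu
      have hu01 : u ∈ Icc (0:ℝ) 1 := Ioo_subset_Icc_self hu
      have := hy_max u hu01
      rwa [hIcc u hu01.2, hIcc y hy01.2] at this
    have hzero := hmax.hasDerivAt_eq_zero hJd
    have hden2 : (1 + θ * (1 - y)) ^ 2 ≠ 0 := pow_ne_zero 2 (ne_of_gt hden_pos)
    rw [div_eq_zero_iff] at hzero
    rcases hzero with hzero | hzero
    · nlinarith [hzero]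
    · exact absurd hzero hden2
  -- rearrangement: ∫_S w ≤ ∫_{[z,1]} w
  obtain ⟨Iy, hIy_def⟩ : ∃ I : ℝ, (∫ t in y..1, w t) = I := ⟨_, rfl⟩
  rw [hIy_def] at hfoc
  set A : Set ℝ := Icc z 1 with hA_def
  have hAm : MeasurableSet A := measurableSet_Icc
  have hvolA : volume A = volume S := by
    rw [hA_def, Real.volume_Icc]
    have h5 : (1 : ℝ) - z = m := by linarith
    rw [h5, ← hm_def, ENNReal.ofReal_toReal hSfin]
  have hwiS : IntegrableOn w S volume := hwi.mono_set hS01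
  have hwiA : IntegrableOn w A volume := hwi.mono_set (Icc_subset_Icc hz01.1 le_rfl)
  have hstepA : (∫ x in S, w x) ≤ ∫ x in A, w x := by
    have hsplitS : (∫ x in S ∩ A, w x) + (∫ x in S \ A, w x) = ∫ x in S, w x :=
      integral_inter_add_diff hAm hwiS
    have hsplitA : (∫ x in A ∩ S, w x) + (∫ x in A \ S, w x) = ∫ x in A, w x :=
      integral_inter_add_diff hSm hwiA
    have hinter : S ∩ A = A ∩ S := inter_comm S A
    -- equal leftover volumes
    have hvol1 : volume (S ∩ A) + volume (S \ A) = volume S := measure_inter_add_diff S hAm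
    have hvol2 : volume (A ∩ S) + volume (A \ S) = volume A := measure_inter_add_diff A hSm
    have hfin : volume (S ∩ A) ≠ ⊤ := ne_top_of_le_ne_top hSfin (measure_mono inter_subset_left)
    have hvol_eq : volume (S \ A) = volume (A \ S) := by
      have : volume (S ∩ A) + volume (S \ A) = volume (S ∩ A) + volume (A \ S) := by
        rw [hvol1, ← hvolA, ← hvol2, hinter]
      exact (ENNReal.add_right_inj hfin).mp this
    -- bound each difference by w z times volume
    have hSA_sub : S \ A ⊆ Icc 0 1 := (diff_subset).trans hS01
    have hAS_sub : A \ S ⊆ Icc 0 1 := (diff_subset).trans (Icc_subset_Icc hz01.1 le_rfl)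
    have hb1 : (∫ x in S \ A, w x) ≤ (volume (S \ A)).toReal * w z := by
      have : (∫ x in S \ A, w x) ≤ ∫ _x in S \ A, w z :=
        setIntegral_mono_on (hwiS.mono_set diff_subset)
          ((integrableOn_const_iff).mpr (Or.inr (lt_of_le_of_lt (measure_mono hSA_sub)
            (by rw [Real.volume_Icc]; exact ENNReal.ofReal_lt_top))))
          (hSm.diff hAm) (by
            intro x hx
            have hx01 := hSA_sub hx
            have hxz : x ≤ z := by
              by_contra hcon
              push_neg at hcon
              exact hx.2 ⟨le_of_lt hcon, hx01.2⟩
            exact (hw_mono.monotoneOn) hx01 hz01 hxz)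
      simpa [setIntegral_const, measureReal_def] using this
    have hb2 : (volume (A \ S)).toReal * w z ≤ ∫ x in A \ S, w x := by
      have : (∫ _x in A \ S, w z) ≤ ∫ x in A \ S, w x :=
        setIntegral_mono_on
          ((integrableOn_const_iff).mpr (Or.inr (lt_of_le_of_lt (measure_mono hAS_sub)
            (by rw [Real.volume_Icc]; exact ENNReal.ofReal_lt_top))))
          (hwiA.mono_set diff_subset)
          (hAm.diff hSm) (by
            intro x hx
            have hx01 := hAS_sub hx
            exact (hw_mono.monotoneOn) hz01 hx01 hx.1.1)
      simpa [setIntegral_const, measureReal_def] using this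
    have hvt : (volume (S \ A)).toReal = (volume (A \ S)).toReal := by rw [hvol_eq]
    have : (∫ x in S \ A, w x) ≤ ∫ x in A \ S, w x := by
      calc (∫ x in S \ A, w x) ≤ (volume (S \ A)).toReal * w z := hb1
        _ = (volume (A \ S)).toReal * w z := by rw [hvt]
        _ ≤ ∫ x in A \ S, w x := hb2
    have hinteq : (∫ x in S ∩ A, w x) = ∫ x in A ∩ S, w x := by rw [hinter]
    linarith [hsplitS, hsplitA]
  -- quadratic gap: G y - G z ≥ κ (z-y)^2
  obtain ⟨Iz, hIz_def⟩ : ∃ I : ℝ, (∫ t in z..1, w t) = I := ⟨_, rfl⟩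
  have hsplit : Iz = (∫ t in z..y, w t) + Iy := by
    rw [← hIz_def, ← hIy_def]
    exact (intervalIntegral.integral_add_adjacent_intervals
      (hII z y hz01 hy01) (hII y 1 hy01 h11)).symm
  -- key integral bound: ∫ z..y (w t - w y) ≤ -(kw*(z-y)^2/2)
  have hlin : ∀ a b : ℝ, (∫ t in a..b, kw * (t - y)) = kw * ((b - y)^2 - (a - y)^2) / 2 := by
    intro a b
    rw [intervalIntegral.integral_const_mul, intervalIntegral.integral_comp_sub_right (fun t => t) y,
      integral_id]
    ring
  have hkey : (∫ t in z..y, (w t - w y)) ≤ -(kw * (z - y)^2 / 2) := by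
    have hint1 : IntervalIntegrable (fun t => w t - w y) volume z y :=
      (hII z y hz01 hy01).sub intervalIntegrable_const
    have hint2 : IntervalIntegrable (fun t => kw * (t - y)) volume z y := by
      apply ContinuousOn.intervalIntegrable
      fun_prop
    rcases le_total z y with hzy | hyz
    · have hmono : (∫ t in z..y, (w t - w y)) ≤ ∫ t in z..y, kw * (t - y) := by
        apply intervalIntegral.integral_mono_on hzy hint1 hint2
        intro t ht
        have ht01 : t ∈ Icc (0:ℝ) 1 := ⟨le_trans hz01.1 ht.1, le_trans ht.2 hy01.2⟩
        have := hgrow t ht01 y hy01 ht.2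
        linarith
      calc (∫ t in z..y, (w t - w y)) ≤ ∫ t in z..y, kw * (t - y) := hmono
        _ = kw * ((y - y)^2 - (z - y)^2) / 2 := hlin z y
        _ = -(kw * (z - y)^2 / 2) := by ring
    · have hmono : (∫ t in y..z, kw * (t - y)) ≤ ∫ t in y..z, (w t - w y) := by
        apply intervalIntegral.integral_mono_on hyz hint2.symm hint1.symm
        intro t ht
        have ht01 : t ∈ Icc (0:ℝ) 1 := ⟨le_trans hy01.1 ht.1, le_trans ht.2 hz01.2⟩
        have := hgrow y hy01 t ht01 ht.1
        linarith
      have heq : (∫ t in z..y, (w t - w y)) = -∫ t in y..z, (w t - w y) :=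
        (intervalIntegral.integral_symm y z)
      rw [heq]
      rw [hlin y z] at hmono
      linarith [hmono]
  -- assemble gap
  have hIsub : (∫ t in z..y, (w t - w y)) = (∫ t in z..y, w t) - (y - z) * w y := by
    rw [intervalIntegral.integral_sub (hII z y hz01 hy01) intervalIntegrable_const,
      intervalIntegral.integral_const, smul_eq_mul]
  have hdenz_pos : 0 < 1 + θ * (1 - z) := by nlinarith [hz01.1, hz01.2]
  have hdeny_pos : 0 < 1 + θ * (1 - y) := by nlinarith [hy01.1, hy01.2]
  have hgap : θ * (kw * (z - y)^2 / 2) / (1 + θ * (1 - z)) ≤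
      (θ * Iy) / (1 + θ * (1 - y)) - (θ * Iz) / (1 + θ * (1 - z)) := by
    have hGy : (θ * Iy) / (1 + θ * (1 - y)) = w y := by
      rw [← hfoc]
      field_simp
    rw [hGy]
    have hnum : θ * Iz ≤ w y * (1 + θ * (1 - z)) - θ * (kw * (z - y)^2 / 2) := by
      have h1 : (∫ t in z..y, w t) ≤ (y - z) * w y - kw * (z - y)^2 / 2 := by
        rw [hIsub] at hkey
        linarith
      have h2 : θ * Iz = θ * (∫ t in z..y, w t) + θ * Iy := by rw [hsplit]; ring
      have h3 : θ * (∫ t in z..y, w t) ≤ θ * ((y - z) * w y - kw * (z - y)^2 / 2) :=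
        mul_le_mul_of_nonneg_left h1 (le_of_lt hθpos)
      rw [← hfoc] at h2
      nlinarith [h2, h3]
    have h4 : (θ * Iz + θ * (kw * (z - y)^2 / 2)) / (1 + θ * (1 - z)) ≤ w y := by
      rw [div_le_iff₀ hdenz_pos]
      nlinarith [hnum]
    rw [add_div] at h4
    linarith [h4]
  -- constant comparison
  have hconst : (θmin * kw / 2) / (1 + θmax) * (z - y)^2 ≤
      θ * (kw * (z - y)^2 / 2) / (1 + θ * (1 - z)) := by
    rw [div_mul_eq_mul_div]
    apply div_le_div₀
    · positivity
    · nlinarith [mul_nonneg (mul_nonneg (sub_nonneg.mpr hθ.1) hkw.le) (sq_nonneg (z - y))]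
    · exact hdenz_pos
    · nlinarith [hz01.1, hz01.2]
  -- final assembly
  have hrS : (θ * ∫ x in S, w x) / (1 + θ * m) ≤ (θ * Iz) / (1 + θ * (1 - z)) := by
    have hmz : 1 + θ * m = 1 + θ * (1 - z) := by rw [← hz_def]; ring
    rw [hmz]
    have hIccz : (∫ x in Icc z 1, w x) = Iz := by rw [hIcc z hz01.2, hIz_def]
    have hle : (∫ x in S, w x) ≤ Iz := by rw [← hIccz]; exact hstepA
    gcongr
  have hGyI : (∫ x in Icc y 1, w x) = Iy := by rw [hIcc y hy01.2, hIy_def]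
  rw [hGyI]
  have hsq : (m - (1 - y))^2 = (z - y)^2 := by rw [← hz_def]; ring
  rw [hsq]
  linarith [hconst, hgap, hrS]
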